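/- Let E be a Banach space, T ∈ L(E) power-bounded with (T^n) converging strongly to an operator P. Let U be a free ultrafilter on ℕ and suppose the lifted operators (T^U)^n on the ultrapower E^U converge strongly to P^U. Then (T^n) converges to P in operator norm. -/

import Mathlib

open Filter Topology

/-- Let `T` be a power-bounded operator on a Banach space whose powers converge strongly
to `P`, let `U` be a free ultrafilter on `ℕ`, and suppose the lifted powers `(T^𝒰)^n`
converge strongly to `P^𝒰` on the ultrapower `E^𝒰` (expressed via representatives: for
every bounded sequence `f` in `E`, the ultrafilter limits of `‖T^n (f k) - P (f k)‖` tend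
to `0` as `n → ∞`).  Then `(T^n)` converges to `P` in operator norm. -/
theorem norm_convergence_of_ultrapower_strong_convergence
    {𝕜 : Type*} [RCLike 𝕜] {E : Type*} [NormedAddCommGroup E] [NormedSpace 𝕜 E]
    [CompleteSpace E]
    (T : E →L[𝕜] E) (hpb : ∃ M : ℝ, ∀ n : ℕ, ‖T ^ n‖ ≤ M)
    (P : E →L[𝕜] E)
    (hstrong : ∀ x : E, Tendsto (fun n : ℕ => (T ^ n) x) atTop (𝓝 (P x)))
    (U : Ultrafilter ℕ) (hU : (U : Filter ℕ) ≤ cofinite)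
    (hultra : ∀ f : ℕ → E, (∃ C : ℝ, ∀ k, ‖f k‖ ≤ C) →
      ∀ ε > (0 : ℝ), ∃ N : ℕ, ∀ n ≥ N,
        {k : ℕ | ‖(T ^ n) (f k) - P (f k)‖ ≤ ε} ∈ U) :
    Tendsto (fun n : ℕ => ‖(T ^ n : E →L[𝕜] E) - P‖) atTop (𝓝 0) := by
  obtain ⟨M, hM⟩ := hpb
  set M0 := max M 1 with hM0def
  have hM0pos : (0 : ℝ) < M0 := lt_of_lt_of_le one_pos (le_max_right _ _)
  have hMn : ∀ n, ‖T ^ n‖ ≤ M0 := fun n => (hM n).trans (le_max_left _ _)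
  -- T^m ∘ P = P
  have hTP : ∀ (m : ℕ) (x : E), (T ^ m) (P x) = P x := by
    intro m x
    have h1 : Tendsto (fun n : ℕ => (T ^ m) ((T ^ n) x)) atTop (𝓝 ((T ^ m) (P x))) :=
      ((T ^ m).continuous.tendsto _).comp (hstrong x)
    have h2 : Tendsto (fun n : ℕ => (T ^ m) ((T ^ n) x)) atTop (𝓝 (P x)) := by
      have h3 := (hstrong x).comp (tendsto_add_atTop_nat m)
      have : (fun n : ℕ => (T ^ (n + m)) x) = fun n : ℕ => (T ^ m) ((T ^ n) x) := by
        funext n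
        rw [add_comm, pow_add, ContinuousLinearMap.mul_apply]
      rw [Function.comp_def] at h3
      rw [← this]; exact h3
    exact tendsto_nhds_unique h1 h2
  have hPP : ∀ x : E, P (P x) = P x := by
    intro x
    have h1 : Tendsto (fun n : ℕ => (T ^ n) (P x)) atTop (𝓝 (P (P x))) := hstrong (P x)
    have h2 : Tendsto (fun n : ℕ => (T ^ n) (P x)) atTop (𝓝 (P x)) := by
      simp only [hTP] at *; exact (tendsto_const_nhds : Tendsto (fun _ : ℕ => P x) atTop (𝓝 (P x)))
    exact tendsto_nhds_unique h1 h2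
  rw [Metric.tendsto_atTop]
  by_contra hcon
  push_neg at hcon
  obtain ⟨ε, hε, hfreq⟩ := hcon
  -- for each k pick n k ≥ k with ε ≤ ‖T ^ (n k) - P‖
  have hpick : ∀ k : ℕ, ∃ n ≥ k, ε ≤ ‖(T ^ n : E →L[𝕜] E) - P‖ := by
    intro k
    obtain ⟨n, hn, hlt⟩ := hfreq k
    refine ⟨n, hn, ?_⟩
    rw [Real.dist_eq, sub_zero, abs_of_nonneg (norm_nonneg _)] at hlt
    exact hlt
  choose n hnk hnε using hpick
  -- pick near-norming vectors
  have hx : ∀ k : ℕ, ∃ x : E, ‖x‖ < 1 ∧ ε / 2 < ‖((T ^ (n k) : E →L[𝕜] E) - P) x‖ := by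
    intro k
    exact ContinuousLinearMap.exists_lt_apply_of_lt_opNorm _
      (lt_of_lt_of_le (by linarith) (hnε k))
  choose x hx1 hx2 using hx
  set y : ℕ → E := fun k => x k - P (x k) with hydef
  have hPy : ∀ k, P (y k) = 0 := by
    intro k; simp [hydef, map_sub, hPP]
  have hybdd : ∃ C : ℝ, ∀ k, ‖y k‖ ≤ C := by
    refine ⟨1 + ‖P‖, fun k => ?_⟩
    calc ‖y k‖ ≤ ‖x k‖ + ‖P (x k)‖ := norm_sub_le _ _
      _ ≤ 1 + ‖P‖ * ‖x k‖ := by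
          have := P.le_opNorm (x k)
          have h1 := (hx1 k).le
          linarith
      _ ≤ 1 + ‖P‖ := by
          have h1 := (hx1 k).le
          have h2 : ‖P‖ * ‖x k‖ ≤ ‖P‖ * 1 :=
            mul_le_mul_of_nonneg_left h1 (norm_nonneg _)
          linarith
  set ε' := ε / (4 * M0) with hε'def
  have hε'pos : 0 < ε' := by positivity
  obtain ⟨N, hN⟩ := hultra y hybdd ε' hε'pos
  have hSN := hN N le_rfl
  have hge : {k : ℕ | N ≤ k} ∈ U := by
    apply hU
    rw [Nat.cofinite_eq_atTop]
    exact mem_atTop N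
  obtain ⟨k, hkS, hkge⟩ := Filter.nonempty_of_mem (Filter.inter_mem hSN hge)
  have hkS' : ‖(T ^ N) (y k) - P (y k)‖ ≤ ε' := hkS
  have hnkN : N ≤ n k := le_trans hkge (hnk k)
  -- (T^(n k) - P) (x k) = T^(n k) (y k)
  have key : ((T ^ (n k) : E →L[𝕜] E) - P) (x k) = (T ^ (n k)) (y k) := by
    simp [hydef, map_sub, hTP]
  -- T^(n k) (y k) = T^(n k - N) (T^N (y k))
  have hsplit : (T ^ (n k)) (y k) = (T ^ (n k - N)) ((T ^ N) (y k)) := by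
    rw [← ContinuousLinearMap.mul_apply, ← pow_add, Nat.sub_add_cancel hnkN]
  have hbound : ‖(T ^ (n k)) (y k)‖ ≤ M0 * ε' := by
    rw [hsplit]
    calc ‖(T ^ (n k - N)) ((T ^ N) (y k))‖
        ≤ ‖T ^ (n k - N)‖ * ‖(T ^ N) (y k)‖ := (T ^ (n k - N)).le_opNorm _
      _ ≤ M0 * ε' := by
          apply mul_le_mul (hMn _) ?_ (norm_nonneg _) (le_of_lt hM0pos)
          have : (T ^ N) (y k) = (T ^ N) (y k) - P (y k) := by rw [hPy k, sub_zero]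
          rw [this]
          exact hkS'
  have : ε / 2 < M0 * ε' := lt_of_lt_of_le (by rw [← key] at hbound ⊢; exact hx2 k) hbound
  rw [hε'def] at this
  have hM0ne : M0 ≠ 0 := ne_of_gt hM0pos
  have : ε / 2 < ε / 4 := by
    have h4 : M0 * (ε / (4 * M0)) = ε / 4 := by field_simp
    linarith [h4 ▸ this]
  linarith
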